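/- Let a, c_1, ..., c_n > 0 and σ ∈ S_n, and define the linear map Θ on n×n complex matrices by Θ(X) = diag(a x_{11} + c_1 x_{σ(1)σ(1)}, ..., a x_{nn} + c_n x_{σ(n)σ(n)}) - X. If a ≥ max(n - 1, n - (c_1···c_n)^(1/n)), then Θ is positive, i.e., it maps positive semidefinite matrices to positive semidefinite matrices. -/

import Mathlib

open Finset Matrix
open scoped ComplexOrder

set_option maxHeartbeats 1000000 in
theorem lemT {n : ℕ} (hn : 1 ≤ n) (a g : ℝ) (w : Fin n → ℝ) (hg : 0 < g)
    (hw : ∀ i, 0 < w i) (hprod : ∏ i, w i = g ^ n)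
    (ha1 : (n : ℝ) - 1 ≤ a) (hag : (n : ℝ) - g ≤ a) :
    ∑ i, 1 / (a + w i) ≤ 1 := by
  rcases eq_or_lt_of_le hn with h1 | h1
  · -- n = 1
    have hn1 : n = 1 := h1.symm
    subst hn1
    rw [Fin.sum_univ_one]
    rw [Fin.prod_univ_one, pow_one] at hprod
    have haw : (1:ℝ) ≤ a + w 0 := by
      rw [hprod]
      push_cast at hag
      linarith
    rw [div_le_one (by linarith)]
    linarith
  have hn2 : (2:ℝ) ≤ (n:ℝ) := by exact_mod_cast h1
  have ha0 : 0 < a := by linarith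
  by_cases hcase : (n:ℝ) ≤ a
  · calc ∑ i, 1/(a + w i) ≤ ∑ i : Fin n, 1/a := by
          apply Finset.sum_le_sum
          intro i _
          exact one_div_le_one_div_of_le ha0 (by linarith [hw i])
      _ = (n:ℝ)/a := by
          rw [Finset.sum_const, Finset.card_univ, Fintype.card_fin]
          rw [nsmul_eq_mul]; ring
      _ ≤ 1 := by rw [div_le_one ha0]; exact hcase
  push_neg at hcase
  set ε := (n:ℝ) - a with hεdef
  have hε0 : 0 < ε := by simp only [hεdef]; linarith
  have hε1 : ε ≤ 1 := by simp only [hεdef]; linarith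
  have hgε : ε ≤ g := by simp only [hεdef]; linarith
  have haw : ∀ i, 0 < a + w i := fun i => by linarith [hw i]
  set δ : Fin n → ℝ := fun i => w i / (a + w i) with hδdef
  have hδ0 : ∀ i, 0 < δ i := fun i => div_pos (hw i) (haw i)
  have hδ1 : ∀ i, δ i < 1 := fun i => (div_lt_one (haw i)).2 (by linarith [hw i])
  set Δ := ∑ i, δ i with hΔdef
  have hΔ0 : 0 < Δ :=
    Finset.sum_pos (fun i _ => hδ0 i) ⟨⟨0, by omega⟩, Finset.mem_univ _⟩
  have key : ∀ i : Fin n, a * (1/(a + w i)) = 1 - δ i := by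
    intro i
    rw [mul_one_div]
    simp only [hδdef]
    rw [eq_sub_iff_add_eq, ← add_div, div_self (haw i).ne']
  have hsum : a * ∑ i, 1/(a+w i) = (n:ℝ) - Δ := by
    rw [Finset.mul_sum]
    have : ∀ i ∈ Finset.univ, a * (1/(a + w i)) = 1 - δ i := fun i _ => key i
    rw [Finset.sum_congr rfl this, Finset.sum_sub_distrib, Finset.sum_const,
      Finset.card_univ, Fintype.card_fin, nsmul_eq_mul, mul_one, hΔdef]
  by_contra hcon
  push_neg at hcon
  have hΔε : Δ < ε := by nlinarith
  have hΔ1 : Δ < 1 := lt_of_lt_of_le hΔε hε1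
  have hnΔ : 0 < (n:ℝ) - Δ := by linarith
  set θ : ℝ := (n:ℝ) * (1 - Δ) / ((n:ℝ) - Δ) with hθdef
  set θ' : ℝ := ((n:ℝ) - 1) * Δ / ((n:ℝ) - Δ) with hθ'def
  have hθθ' : θ + θ' = 1 := by
    simp only [hθdef, hθ'def]
    field_simp
    ring
  have hθ0 : 0 ≤ θ := by
    apply div_nonneg _ hnΔ.le
    nlinarith
  have hθ'0 : 0 < θ' := by
    apply div_pos _ hnΔ
    nlinarith
  set e : ℝ := θ' / ((n:ℝ) - 1) with hedef
  have he0 : 0 < e := div_pos hθ'0 (by linarith)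
  have heΔ : e = Δ / ((n:ℝ) - Δ) := by
    have hne1 : ((n:ℝ) - 1) ≠ 0 := ne_of_gt (by linarith)
    have hne2 : ((n:ℝ) - Δ) ≠ 0 := ne_of_gt hnΔ
    rw [hedef, hθ'def]
    field_simp
  set m : ℝ := ((n:ℝ) - Δ) / (n:ℝ) with hmdef
  have hm0 : 0 < m := div_pos hnΔ (by linarith)
  set y : Fin n → ℝ := fun j => δ j * (((n:ℝ) - Δ)/Δ) with hydef
  have hy0 : ∀ j, 0 < y j := fun j => mul_pos (hδ0 j) (div_pos hnΔ hΔ0)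
  set Y := ∏ j, y j with hYdef
  have hY0 : 0 < Y := Finset.prod_pos (fun j _ => hy0 j)
  -- per-i AM-GM
  have perI : ∀ i : Fin n, m ^ θ * (Y / y i) ^ e ≤ 1 - δ i := by
    intro i
    have hAM := Real.geom_mean_le_arith_mean_weighted Finset.univ
      (fun j => if j = i then θ else e) (fun j => if j = i then m else y j)
      (fun j _ => by by_cases h : j = i <;> simp [h, hθ0, he0.le])
      ?_ (fun j _ => by by_cases h : j = i <;> simp [h, hm0.le, (hy0 j).le])
    · -- hAM : ∏ ... ≤ ∑ ...
      have hL : (∏ j, (if j = i then m else y j) ^ (if j = i then θ else e))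
          = m ^ θ * (∏ j ∈ Finset.univ.erase i, (y j) ^ e) := by
        rw [← Finset.prod_erase_mul _ _ (Finset.mem_univ i)]
        simp only [eq_self_iff_true, if_true]
        rw [mul_comm]
        congr 1
        apply Finset.prod_congr rfl
        intro j hj
        rw [if_neg (Finset.ne_of_mem_erase hj), if_neg (Finset.ne_of_mem_erase hj)]
      have hR : (∑ j, (if j = i then θ else e) * (if j = i then m else y j))
          = 1 - δ i := by
        rw [← Finset.sum_erase_add _ _ (Finset.mem_univ i)]
        simp only [eq_self_iff_true, if_true]
        have h1 : ∀ j ∈ Finset.univ.erase i,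
            (if j = i then θ else e) * (if j = i then m else y j) = δ j := by
          intro j hj
          rw [if_neg (Finset.ne_of_mem_erase hj), if_neg (Finset.ne_of_mem_erase hj)]
          rw [heΔ]
          simp only [hydef]
          field_simp
        rw [Finset.sum_congr rfl h1]
        have h2 : θ * m = 1 - Δ := by
          simp only [hθdef, hmdef]
          field_simp
        have h3 : ∑ j ∈ Finset.univ.erase i, δ j = Δ - δ i := by
          rw [hΔdef, ← Finset.sum_erase_add _ _ (Finset.mem_univ i)]
          ring
        rw [h3, h2]
        ring
      have herase : (∏ j ∈ Finset.univ.erase i, (y j) ^ e) = (Y / y i) ^ e := by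
        rw [Real.finset_prod_rpow _ _ (fun j _ => (hy0 j).le)]
        congr 1
        rw [eq_div_iff (hy0 i).ne']
        exact Finset.prod_erase_mul _ _ (Finset.mem_univ i)
      rw [hL, herase, hR] at hAM
      exact hAM
    · -- sum of weights = 1
      rw [← Finset.sum_erase_add _ _ (Finset.mem_univ i)]
      simp only [eq_self_iff_true, if_true]
      have h1 : ∀ j ∈ Finset.univ.erase i, (if j = i then θ else e) = e :=
        fun j hj => if_neg (Finset.ne_of_mem_erase hj)
      rw [Finset.sum_congr rfl h1, Finset.sum_const, Finset.card_erase_of_mem (Finset.mem_univ i),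
        Finset.card_univ, Fintype.card_fin, nsmul_eq_mul]
      have : ((n - 1 : ℕ) : ℝ) = (n:ℝ) - 1 := by
        have : 1 ≤ n := by omega
        push_cast [this]
        ring
      rw [this]
      have h4 : ((n:ℝ) - 1) * e = θ' := by
        rw [hedef, mul_comm, div_mul_cancel₀ _ (ne_of_gt (by linarith : (0:ℝ) < (n:ℝ) - 1))]
      linarith [hθθ', h4]
  have hne_n : ((n:ℝ)) ≠ 0 := by positivity
  have prodIneq : ∏ i, (m ^ θ * (Y / y i) ^ e) ≤ ∏ i, (1 - δ i) := by
    apply Finset.prod_le_prod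
    · intro i _
      exact mul_nonneg (Real.rpow_nonneg hm0.le _)
        (Real.rpow_nonneg (div_nonneg hY0.le (hy0 i).le) _)
    · intro i _
      exact perI i
  have hθ'e : ((n:ℝ) - 1) * e = θ' := by
    rw [hedef, mul_comm, div_mul_cancel₀ _ (ne_of_gt (by linarith : (0:ℝ) < (n:ℝ) - 1))]
  have hprod_lhs : ∏ i, (m ^ θ * (Y / y i) ^ e) = m ^ (θ * (n:ℝ)) * Y ^ θ' := by
    rw [Finset.prod_mul_distrib, Finset.prod_const, Finset.card_univ, Fintype.card_fin]
    congr 1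
    · rw [← Real.rpow_natCast (m ^ θ) n, ← Real.rpow_mul hm0.le]
    · rw [Real.finset_prod_rpow _ _ (fun i _ => div_nonneg hY0.le (hy0 i).le) e]
      rw [Finset.prod_div_distrib, Finset.prod_const, Finset.card_univ, Fintype.card_fin]
      have h6 : Y ^ n / Y = Y ^ ((n:ℝ) - 1) := by
        rw [Real.rpow_sub hY0, Real.rpow_one, Real.rpow_natCast]
      rw [h6, ← Real.rpow_mul hY0.le, hθ'e]
  have hprodδ : ∏ i, δ i ≤ (Δ/(n:ℝ))^n := by
    have hgm := Real.geom_mean_le_arith_mean_weighted Finset.univ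
      (fun _ => 1/(n:ℝ)) δ (fun i _ => by positivity)
      (by rw [Finset.sum_const, Finset.card_univ, Fintype.card_fin, nsmul_eq_mul]
          field_simp)
      (fun i _ => (hδ0 i).le)
    rw [Real.finset_prod_rpow _ _ (fun i _ => (hδ0 i).le)] at hgm
    have hsum' : ∑ i, 1/(n:ℝ) * δ i = Δ/(n:ℝ) := by
      rw [← Finset.mul_sum, ← hΔdef]
      ring
    rw [hsum'] at hgm
    have hx0 : (0:ℝ) ≤ ∏ i, δ i := Finset.prod_nonneg (fun i _ => (hδ0 i).le)
    calc ∏ i, δ i = ((∏ i, δ i) ^ ((1:ℝ)/(n:ℝ))) ^ (n:ℕ) := by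
          rw [← Real.rpow_natCast ((∏ i, δ i) ^ ((1:ℝ)/(n:ℝ))) n, ← Real.rpow_mul hx0,
            one_div, inv_mul_cancel₀ hne_n, Real.rpow_one]
      _ ≤ (Δ/(n:ℝ))^(n:ℕ) := pow_le_pow_left₀ (Real.rpow_nonneg hx0 _) hgm n
  have hY_eq : Y = (∏ i, δ i) * (((n:ℝ)-Δ)/Δ)^n := by
    rw [hYdef, hydef, Finset.prod_mul_distrib, Finset.prod_const, Finset.card_univ,
      Fintype.card_fin]
  have hYM : Y ≤ m ^ (n:ℕ) := by
    rw [hY_eq]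
    calc (∏ i, δ i) * (((n:ℝ)-Δ)/Δ)^n ≤ (Δ/(n:ℝ))^n * (((n:ℝ)-Δ)/Δ)^n := by
          apply mul_le_mul_of_nonneg_right hprodδ (by positivity)
      _ = m ^ n := by
          rw [← mul_pow]
          congr 1
          rw [hmdef]
          field_simp
  have hYθ' : Y * (m^(n:ℕ)) ^ (-θ) ≤ Y ^ θ' := by
    have h7 : θ' = 1 + (-θ) := by linarith
    rw [h7, Real.rpow_add hY0, Real.rpow_one]
    apply mul_le_mul_of_nonneg_left _ hY0.le
    rw [Real.rpow_neg hY0.le, Real.rpow_neg (pow_nonneg hm0.le n)]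
    apply inv_anti₀ (Real.rpow_pos_of_pos hY0 θ)
    exact Real.rpow_le_rpow hY0.le hYM hθ0
  have hmθ : m ^ (θ * (n:ℝ)) * (m^(n:ℕ)) ^ (-θ) = 1 := by
    rw [← Real.rpow_natCast m n, ← Real.rpow_mul hm0.le, ← Real.rpow_add hm0]
    have : θ * (n:ℝ) + (n:ℝ) * (-θ) = 0 := by ring
    rw [this, Real.rpow_zero]
  have hYfinal : Y ≤ ∏ i, (1 - δ i) := by
    calc Y = m ^ (θ * (n:ℝ)) * (Y * (m^(n:ℕ)) ^ (-θ)) := by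
          rw [show m ^ (θ * (n:ℝ)) * (Y * (m^(n:ℕ)) ^ (-θ))
              = Y * (m ^ (θ * (n:ℝ)) * (m^(n:ℕ)) ^ (-θ)) by ring, hmθ, mul_one]
      _ ≤ m ^ (θ * (n:ℝ)) * Y ^ θ' := by
          apply mul_le_mul_of_nonneg_left hYθ' (Real.rpow_nonneg hm0.le _)
      _ = ∏ i, (m ^ θ * (Y / y i) ^ e) := hprod_lhs.symm
      _ ≤ ∏ i, (1 - δ i) := prodIneq
  set Pβ := ∏ i, 1/(a + w i) with hPβdef
  have hPβ0 : 0 < Pβ := Finset.prod_pos (fun i _ => one_div_pos.mpr (haw i))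
  have hprod1δ : ∏ i, (1 - δ i) = a^(n:ℕ) * Pβ := by
    rw [Finset.prod_congr rfl (fun i _ => (key i).symm), Finset.prod_mul_distrib,
      Finset.prod_const, Finset.card_univ, Fintype.card_fin]
  have hprodδ_eq : ∏ i, δ i = g^(n:ℕ) * Pβ := by
    have : ∀ i ∈ Finset.univ, δ i = w i * (1/(a + w i)) := by
      intro i _
      simp only [hδdef]
      rw [mul_one_div]
    rw [Finset.prod_congr rfl this, Finset.prod_mul_distrib, hprod]
  have hfin : (g * (((n:ℝ)-Δ)/Δ))^(n:ℕ) * Pβ ≤ a^(n:ℕ) * Pβ := by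
    calc (g * (((n:ℝ)-Δ)/Δ))^(n:ℕ) * Pβ = Y := by
          rw [hY_eq, hprodδ_eq, mul_pow]
          ring
      _ ≤ ∏ i, (1 - δ i) := hYfinal
      _ = a^(n:ℕ) * Pβ := hprod1δ
  have hfin2 : g * (((n:ℝ)-Δ)/Δ) ≤ a := by
    apply le_of_pow_le_pow_left₀ (by omega : n ≠ 0) ha0.le
    exact le_of_mul_le_mul_right hfin hPβ0
  have hfin3 : g * ((n:ℝ)-Δ) ≤ a * Δ := by
    rw [mul_div_assoc'] at hfin2
    exact (div_le_iff₀ hΔ0).mp hfin2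
  have hfin4 : ε * ((n:ℝ)-Δ) ≤ g * ((n:ℝ)-Δ) :=
    mul_le_mul_of_nonneg_right hgε hnΔ.le
  have ha_eq : a = (n:ℝ) - ε := by rw [hεdef]; ring
  have h11 : ε * ((n:ℝ)-Δ) = ε*(n:ℝ) - ε*Δ := by ring
  have h12 : a * Δ = (n:ℝ)*Δ - ε*Δ := by rw [ha_eq]; ring
  have h13 : ε ≤ Δ := by
    apply le_of_mul_le_mul_left _ (by linarith : (0:ℝ) < (n:ℝ))
    linarith
  exact absurd h13 (not_le.mpr hΔε)


set_option maxHeartbeats 1000000 in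
theorem lemM {n : ℕ} (hn : 0 < n) (σ : Equiv.Perm (Fin n)) (a : ℝ) (c : Fin n → ℝ)
    (ha0 : 0 < a) (hc : ∀ i, 0 < c i)
    (ha1 : (n : ℝ) - 1 ≤ a) (hag : (n : ℝ) - (∏ i, c i) ^ ((1:ℝ)/(n:ℝ)) ≤ a)
    (p q : Fin n → ℝ) (hp : ∀ i, 0 ≤ p i) (hq : ∀ i, 0 ≤ q i) :
    (∑ i, p i * q i)^2 ≤ ∑ i, (a * q i^2 + c i * q (σ i)^2) * p i^2 := by
  classical
  set d : Fin n → ℝ := fun i => a * q i^2 + c i * q (σ i)^2 with hddef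
  have hd0 : ∀ i, 0 ≤ d i := fun i =>
    add_nonneg (mul_nonneg ha0.le (sq_nonneg _)) (mul_nonneg (hc i).le (sq_nonneg _))
  set T : Finset (Fin n) := Finset.univ.filter (fun i => q i ≠ 0) with hTdef
  have hdT : ∀ i ∈ T, 0 < d i := by
    intro i hi
    have hqi : q i ≠ 0 := (Finset.mem_filter.mp hi).2
    have : 0 < q i ^ 2 := pow_pos (lt_of_le_of_ne (hq i) (Ne.symm hqi)) 2
    have := mul_pos ha0 this
    have h2 : 0 ≤ c i * q (σ i)^2 := mul_nonneg (hc i).le (sq_nonneg _)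
    simp only [hddef]
    linarith
  -- step S
  have stepS : ∑ i ∈ T, q i^2 / d i ≤ 1 := by
    by_cases hT : T = Finset.univ
    · -- all q nonzero: use lemT
      have hmemT : ∀ i, i ∈ T := by
        intro i
        rw [hT]
        exact Finset.mem_univ i
      have hqi : ∀ i, q i ≠ 0 := fun i => (Finset.mem_filter.mp (hmemT i)).2
      have hq2 : ∀ i, 0 < q i ^ 2 := fun i => pow_pos (lt_of_le_of_ne (hq i) (Ne.symm (hqi i))) 2
      set w : Fin n → ℝ := fun i => c i * q (σ i)^2 / q i^2 with hwdef
      have hw0 : ∀ i, 0 < w i := fun i => div_pos (mul_pos (hc i) (hq2 (σ i))) (hq2 i)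
      have hterm : ∀ i, q i^2 / d i = 1/(a + w i) := by
        intro i
        have hkey : q i^2 * (a + w i) = d i := by
          simp only [hddef, hwdef]
          rw [mul_add]
          congr 1
          · ring
          · rw [mul_comm]
            exact div_mul_cancel₀ _ (hq2 i).ne'
        rw [← hkey, div_mul_cancel_left₀ (hq2 i).ne', one_div]
      have hprodw : ∏ i, w i = (∏ i, c i) := by
        simp only [hwdef]
        rw [Finset.prod_div_distrib, Finset.prod_mul_distrib]
        rw [show (∏ i, q (σ i)^2) = ∏ i, q i ^2 from Equiv.prod_comp σ (fun i => q i ^2)]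
        rw [mul_div_assoc, div_self (Finset.prod_pos (fun i _ => hq2 i)).ne', mul_one]
      have hcprod : 0 < ∏ i, c i := Finset.prod_pos (fun i _ => hc i)
      set g : ℝ := (∏ i, c i) ^ ((1:ℝ)/(n:ℝ)) with hgdef
      have hg0 : 0 < g := Real.rpow_pos_of_pos hcprod _
      have hgn : g ^ (n:ℕ) = ∏ i, c i := by
        rw [hgdef, ← Real.rpow_natCast ((∏ i, c i) ^ ((1:ℝ)/(n:ℝ))) n,
          ← Real.rpow_mul hcprod.le, one_div, inv_mul_cancel₀
          (by positivity : ((n:ℝ)) ≠ 0), Real.rpow_one]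
      rw [hT]
      calc ∑ i, q i^2 / d i = ∑ i, 1/(a + w i) :=
            Finset.sum_congr rfl (fun i _ => hterm i)
        _ ≤ 1 := lemT hn a g w hg0 hw0 (by rw [hprodw, hgn]) ha1 hag
    · -- some q i = 0
      have hsub : T ⊆ Finset.univ := Finset.filter_subset _ _
      have hcard : (T.card : ℝ) ≤ (n:ℝ) - 1 := by
        have h2 : T.card < n := by
          have h4 := Finset.card_lt_card (lt_of_le_of_ne hsub hT)
          simpa using h4
        have h3 : (T.card : ℝ) + 1 ≤ (n : ℝ) := by exact_mod_cast h2
        linarith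
      calc ∑ i ∈ T, q i^2 / d i ≤ ∑ i ∈ T, 1/a := by
            apply Finset.sum_le_sum
            intro i hi
            rw [div_le_div_iff₀ (hdT i hi) ha0]
            simp only [hddef]
            have h9 : 0 ≤ c i * q (σ i)^2 := mul_nonneg (hc i).le (sq_nonneg _)
            rw [mul_comm, one_mul]
            linarith
        _ = (T.card : ℝ) / a := by
            rw [Finset.sum_const, nsmul_eq_mul, mul_one_div]
        _ ≤ ((n:ℝ) - 1)/a := by gcongr
        _ ≤ 1 := by
            rw [div_le_one ha0]
            exact ha1
  -- Cauchy-Schwarz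
  have hcs := Finset.sum_mul_sq_le_sq_mul_sq T
    (fun i => Real.sqrt (d i) * p i) (fun i => q i / Real.sqrt (d i))
  have hL : ∑ i ∈ T, (Real.sqrt (d i) * p i) * (q i / Real.sqrt (d i)) = ∑ i ∈ T, p i * q i := by
    apply Finset.sum_congr rfl
    intro i hi
    have hs : Real.sqrt (d i) ≠ 0 := (Real.sqrt_pos.mpr (hdT i hi)).ne'
    field_simp
  have hF : ∑ i ∈ T, (Real.sqrt (d i) * p i)^2 = ∑ i ∈ T, d i * p i^2 := by
    apply Finset.sum_congr rfl
    intro i hi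
    rw [mul_pow, Real.sq_sqrt (hd0 i)]
  have hG : ∑ i ∈ T, (q i / Real.sqrt (d i))^2 = ∑ i ∈ T, q i^2 / d i := by
    apply Finset.sum_congr rfl
    intro i hi
    rw [div_pow, Real.sq_sqrt (hd0 i)]
  rw [hL, hF, hG] at hcs
  have hTsum : ∑ i ∈ T, p i * q i = ∑ i, p i * q i := by
    apply Finset.sum_filter_of_ne
    intro i _ hne
    intro hq0
    apply hne
    rw [hq0, mul_zero]
  have hsub2 : ∑ i ∈ T, d i * p i^2 ≤ ∑ i, d i * p i^2 := by
    apply Finset.sum_le_sum_of_subset_of_nonneg (Finset.filter_subset _ _)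
    intro i _ _
    exact mul_nonneg (hd0 i) (sq_nonneg _)
  have hdp0 : 0 ≤ ∑ i ∈ T, d i * p i^2 :=
    Finset.sum_nonneg (fun i _ => mul_nonneg (hd0 i) (sq_nonneg _))
  calc (∑ i, p i * q i)^2 = (∑ i ∈ T, p i * q i)^2 := by rw [hTsum]
    _ ≤ (∑ i ∈ T, d i * p i^2) * (∑ i ∈ T, q i^2 / d i) := hcs
    _ ≤ (∑ i ∈ T, d i * p i^2) * 1 := by
        apply mul_le_mul_of_nonneg_left stepS hdp0
    _ = ∑ i ∈ T, d i * p i^2 := mul_one _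
    _ ≤ ∑ i, d i * p i^2 := hsub2


/-- The map `Θ^{(n,σ)}[a; c₁,…,c_n]` on `n × n` complex matrices. -/
def ThetaMap (n : ℕ) (σ : Equiv.Perm (Fin n)) (a : ℝ) (c : Fin n → ℝ)
    (X : Matrix (Fin n) (Fin n) ℂ) : Matrix (Fin n) (Fin n) ℂ :=
  Matrix.diagonal (fun i => (a : ℂ) * X i i + (c i : ℂ) * X (σ i) (σ i)) - X

set_option maxHeartbeats 1000000 in
theorem stmt8 (n : ℕ) (hn : 0 < n) (σ : Equiv.Perm (Fin n)) (a : ℝ) (c : Fin n → ℝ)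
    (ha0 : 0 < a) (hc : ∀ i, 0 < c i)
    (ha : max ((n : ℝ) - 1) ((n : ℝ) - (∏ i, c i) ^ ((1 : ℝ) / n)) ≤ a) :
    ∀ X : Matrix (Fin n) (Fin n) ℂ, X.PosSemidef → (ThetaMap n σ a c X).PosSemidef := by
  have ha1 : (n:ℝ) - 1 ≤ a := le_trans (le_max_left _ _) ha
  have hag : (n:ℝ) - (∏ i, c i) ^ ((1:ℝ)/(n:ℝ)) ≤ a := le_trans (le_max_right _ _) ha
  intro X hX
  have hdiagreal : ∀ i, star (X i i) = X i i := by
    intro i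
    have h := congrFun (congrFun hX.1 i) i
    rwa [Matrix.conjTranspose_apply] at h
  obtain ⟨B, hB⟩ : ∃ B : Matrix (Fin n) (Fin n) ℂ, X = Bᴴ * B := by
    open scoped MatrixOrder in
    exact CStarAlgebra.nonneg_iff_eq_star_mul_self.mp hX.nonneg
  rw [Matrix.posSemidef_iff_dotProduct_mulVec]
  constructor
  · -- Hermitian
    apply Matrix.IsHermitian.sub _ hX.1
    apply Matrix.isHermitian_diagonal_of_self_adjoint
    funext i
    simp only [Pi.star_apply, star_add, star_mul', Complex.star_def, Complex.conj_ofReal]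
    have hdr : ∀ j, (starRingEnd ℂ) (X j j) = X j j := fun j => hdiagreal j
    rw [hdr i, hdr (σ i)]
  · intro v
    have habs2 : ∀ z : ℂ, star z * z = ((‖z‖ ^ 2 : ℝ) : ℂ) := by
      intro z
      rw [Complex.star_def, ← Complex.normSq_eq_conj_mul_self, Complex.sq_norm]
    set f : Fin n → ℂ := fun i => (a : ℂ) * X i i + (c i : ℂ) * X (σ i) (σ i) with hfdef
    set u : Fin n → ℂ := B *ᵥ v with hudef
    set P : Fin n → ℝ := fun i => ‖v i‖ with hPdef
    set Q : Fin n → Fin n → ℝ := fun k i => ‖B k i‖ with hQdef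
    set s : Fin n → ℝ := fun i => ∑ k, Q k i ^ 2 with hsdef
    have hXdiag : ∀ i, X i i = ((s i : ℝ) : ℂ) := by
      intro i
      rw [hB, Matrix.mul_apply]
      rw [hsdef]
      simp only
      rw [Complex.ofReal_sum]
      apply Finset.sum_congr rfl
      intro k _
      rw [Matrix.conjTranspose_apply, habs2 (B k i)]
    have hXform : star v ⬝ᵥ (X *ᵥ v) = ((∑ k, ‖u k‖ ^ 2 : ℝ) : ℂ) := by
      rw [hB, ← Matrix.mulVec_mulVec, Matrix.dotProduct_mulVec, Matrix.vecMul_conjTranspose,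
        star_star]
      unfold dotProduct
      rw [Complex.ofReal_sum]
      apply Finset.sum_congr rfl
      intro k _
      rw [Pi.star_apply, habs2 ((B *ᵥ v) k), hudef]
    have hvv : ∀ i, star (v i) * v i = ((P i ^ 2 : ℝ) : ℂ) := by
      intro i
      rw [habs2 (v i), hPdef]
    have hDform : star v ⬝ᵥ (Matrix.diagonal f *ᵥ v)
        = ((∑ i, (a * s i + c i * s (σ i)) * P i ^ 2 : ℝ) : ℂ) := by
      unfold dotProduct
      rw [Complex.ofReal_sum]
      apply Finset.sum_congr rfl
      intro i _
      rw [Matrix.mulVec_diagonal]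
      rw [hfdef]
      simp only
      rw [hXdiag i, hXdiag (σ i)]
      calc star (v i) * ((↑a * ↑(s i) + ↑(c i) * ↑(s (σ i))) * v i)
          = (↑a * ↑(s i) + ↑(c i) * ↑(s (σ i))) * (star (v i) * v i) := by ring
        _ = (↑a * ↑(s i) + ↑(c i) * ↑(s (σ i))) * ((P i ^ 2 : ℝ) : ℂ) := by rw [hvv i]
        _ = _ := by push_cast; ring
    have hsplit : star v ⬝ᵥ (ThetaMap n σ a c X *ᵥ v)
        = ((∑ i, (a * s i + c i * s (σ i)) * P i ^ 2 - ∑ k, ‖u k‖ ^ 2 : ℝ) : ℂ) := by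
      unfold ThetaMap
      rw [Matrix.sub_mulVec, dotProduct_sub, ← hfdef, hDform, hXform]
      push_cast
      ring
    rw [hsplit]
    rw [Complex.zero_le_real]
    rw [sub_nonneg]
    have hexpand : ∑ i, (a * s i + c i * s (σ i)) * P i ^ 2
        = ∑ k, ∑ i, (a * Q k i ^ 2 + c i * Q k (σ i) ^ 2) * P i ^ 2 := by
      rw [Finset.sum_comm]
      apply Finset.sum_congr rfl
      intro i _
      rw [hsdef]
      simp only
      rw [Finset.mul_sum, Finset.mul_sum, ← Finset.sum_add_distrib, ← Finset.sum_mul]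
    rw [hexpand]
    apply Finset.sum_le_sum
    intro k _
    have htri : ‖u k‖ ≤ ∑ i, P i * Q k i := by
      rw [hudef]
      calc ‖(B *ᵥ v) k‖ = ‖∑ i, B k i * v i‖ := rfl
        _ ≤ ∑ i, ‖B k i * v i‖ := norm_sum_le _ _
        _ = ∑ i, P i * Q k i := by
            apply Finset.sum_congr rfl
            intro i _
            rw [norm_mul, hPdef, hQdef]
            simp only
            ring
    calc ‖u k‖ ^ 2 ≤ (∑ i, P i * Q k i) ^ 2 := by
          apply pow_le_pow_left₀ (norm_nonneg _) htri
      _ ≤ ∑ i, (a * Q k i ^ 2 + c i * Q k (σ i) ^ 2) * P i ^ 2 := by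
          apply lemM hn σ a c ha0 hc ha1 hag P (Q k) (fun i => norm_nonneg _)
            (fun i => norm_nonneg _)
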